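/- arXiv:1008.4278 — 7 statements merged into one kernel-verified Lean document; each statement's English description precedes it below -/
import Mathlib

section
/- For any Θ in Λ²⊗S² (i.e., Θ(x,y,z,w) antisymmetric in (x,y) and symmetric in (z,w)), the tensor A defined by A(x,y,z,w) := Θ(x,y,z,w) + ½[Θ(z,y,x,w) + Θ(x,z,y,w) − Θ(w,y,x,z) − Θ(x,w,y,z)] is a generalized curvature tensor: it is antisymmetric in (x,y) and satisfies the first Bianchi identity. -/
/-- For `Θ ∈ Λ² ⊗ S²` the tensor
`A(x,y,z,w) = Θ(x,y,z,w) + ½[Θ(z,y,x,w) + Θ(x,z,y,w) − Θ(w,y,x,z) − Θ(x,w,y,z)]`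
is a generalized curvature tensor. -/
theorem sigma_of_LambdaS_is_generalized_curvature
    {V : Type*} [AddCommGroup V] [Module ℝ V]
    (Θ : V → V → V → V → ℝ)
    (hΘ12 : ∀ x y z w, Θ x y z w = - Θ y x z w)
    (hΘ34 : ∀ x y z w, Θ x y z w = Θ x y w z)
    (A : V → V → V → V → ℝ)
    (hA : ∀ x y z w, A x y z w = Θ x y z w +
      (1/2) * (Θ z y x w + Θ x z y w - Θ w y x z - Θ x w y z)) :
    (∀ x y z w, A x y z w = - A y x z w) ∧
    (∀ x y z w, A x y z w + A y z x w + A z x y w = 0) := by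
  constructor
  · intro x y z w
    rw [hA, hA]
    linarith [hΘ12 x y z w, hΘ12 z y x w, hΘ12 x z y w, hΘ12 w y x z, hΘ12 x w y z,
      hΘ12 z x y w, hΘ12 w x y z]
  · intro x y z w
    rw [hA, hA, hA]
    linarith [hΘ12 x y z w, hΘ12 y z x w, hΘ12 z x y w,
      hΘ12 z y x w, hΘ12 x z y w, hΘ12 w y x z, hΘ12 x w y z,
      hΘ12 x z y w, hΘ12 y x z w, hΘ12 w z y x, hΘ12 y w z x,
      hΘ12 y x z w, hΘ12 z y x w, hΘ12 w x z y, hΘ12 z w x y,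
      hΘ34 x y z w, hΘ34 y z x w, hΘ34 z x y w,
      hΘ34 w y x z, hΘ34 x w y z, hΘ34 w z y x, hΘ34 y w z x,
      hΘ34 w x z y, hΘ34 z w x y,
      hΘ34 y x w z, hΘ34 z y w x, hΘ34 x z w y]
end

section
/- Let A be a Weyl tensor on (V,h) with n = dim V ≥ 3. Then the antisymmetric parts of the two Ricci tensors satisfy Λ Ric*(A) = ((n−4)/n) · Λ Ric(A). In particular, if n = 4 then Ric*(A) is symmetric. -/
/-- For a Weyl tensor `A` on `(V,h)`, `n ≥ 3`, the antisymmetric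
parts of the two Ricci tensors satisfy `Λ Ric* = ((n−4)/n)·Λ Ric`; in
particular `Ric*` is symmetric when `n = 4`. -/
theorem weyl_alt_ricci_star_eq
    {n : ℕ} (hn : 3 ≤ n)
    (h hinv : Matrix (Fin n) (Fin n) ℝ)
    (hsymm : ∀ i j, h i j = h j i)
    (hinv1 : h * hinv = 1) (hinv2 : hinv * h = 1)
    (A : Fin n → Fin n → Fin n → Fin n → ℝ)
    (hA12 : ∀ i j k l, A i j k l = - A j i k l)
    (hBianchi : ∀ i j k l, A i j k l + A j k i l + A k i j l = 0)
    (Ric RicStar : Fin n → Fin n → ℝ)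
    (hRic : ∀ x y, Ric x y = ∑ i, ∑ j, hinv i j * A i x y j)
    (hRicStar : ∀ x y, RicStar x y = ∑ i, ∑ j, hinv i j * A x i j y)
    (hWeyl : ∀ x y z w, A x y z w + A x y w z =
      (2 / (n : ℝ)) * (Ric y x - Ric x y) * h z w) :
    (∀ x y, (1/2) * (RicStar x y - RicStar y x)
        = (((n : ℝ) - 4) / (n : ℝ)) * ((1/2) * (Ric x y - Ric y x))) ∧
    (n = 4 → ∀ x y, RicStar x y = RicStar y x) := by
  have hn0 : (n : ℝ) ≠ 0 := by
    have : 0 < n := by omega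
    exact_mod_cast this.ne'
  -- hinv is symmetric
  have hinvsymm : ∀ i j, hinv i j = hinv j i := by
    have hT : Matrix.transpose h = h := by
      ext i j; exact hsymm j i
    have hinvT : Matrix.transpose hinv = hinv := by
      calc Matrix.transpose hinv
          = Matrix.transpose hinv * (h * hinv) := by rw [hinv1, mul_one]
        _ = (Matrix.transpose hinv * Matrix.transpose h) * hinv := by
            rw [hT, Matrix.mul_assoc]
        _ = Matrix.transpose (h * hinv) * hinv := by rw [Matrix.transpose_mul]
        _ = hinv := by rw [hinv1, Matrix.transpose_one, one_mul]
    intro i j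
    have := congrFun (congrFun hinvT j) i
    simpa [Matrix.transpose_apply] using this
  have key : ∀ x y, RicStar x y
      = Ric x y - (2 / (n : ℝ)) * (Ric x y - Ric y x) := by
    intro x y
    -- trace over antisymmetric pair vanishes
    have hzero : ∑ i, ∑ j, hinv i j * A i j x y = 0 := by
      have h1 : ∑ i, ∑ j, hinv i j * A i j x y
          = ∑ i, ∑ j, -(hinv i j * A i j x y) := by
        rw [Finset.sum_comm]
        refine Finset.sum_congr rfl fun i _ => Finset.sum_congr rfl fun j _ => ?_
        rw [hinvsymm j i, hA12 j i]
        ring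
      have h2 : ∑ i, ∑ j, -(hinv i j * A i j x y)
          = -∑ i, ∑ j, hinv i j * A i j x y := by
        simp
      have := h1.trans h2
      linarith
    -- delta contraction
    have hdelta : ∀ (c : Fin n → ℝ), ∑ i, ∑ j, hinv i j * h j y * c i = c y := by
      intro c
      have hrow : ∀ i, ∑ j, hinv i j * h j y = (1 : Matrix (Fin n) (Fin n) ℝ) i y := by
        intro i; rw [← hinv2, Matrix.mul_apply]
      calc ∑ i, ∑ j, hinv i j * h j y * c i
          = ∑ i, (∑ j, hinv i j * h j y) * c i := by
            refine Finset.sum_congr rfl fun i _ => ?_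
            rw [Finset.sum_mul]
        _ = ∑ i, (1 : Matrix (Fin n) (Fin n) ℝ) i y * c i := by
            refine Finset.sum_congr rfl fun i _ => ?_
            rw [hrow]
        _ = c y := by
            simp [Matrix.one_apply]
    have hswap : ∑ i, ∑ j, hinv i j * A j x i y
        = ∑ i, ∑ j, hinv i j * A i x j y := by
      rw [Finset.sum_comm]
      exact Finset.sum_congr rfl fun i _ => Finset.sum_congr rfl fun j _ => by
        rw [hinvsymm]
    have hmain : ∑ i, ∑ j, hinv i j * A i x j y
        = (2 / (n : ℝ)) * (Ric x y - Ric y x) - Ric x y := by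
      have hW : ∀ i j, A i x j y
          = (2 / (n : ℝ)) * (Ric x i - Ric i x) * h j y - A i x y j := by
        intro i j
        have := hWeyl i x j y
        linarith
      calc ∑ i, ∑ j, hinv i j * A i x j y
          = ∑ i, ∑ j, (hinv i j * ((2 / (n : ℝ)) * (Ric x i - Ric i x) * h j y)
              - hinv i j * A i x y j) := by
            refine Finset.sum_congr rfl fun i _ => Finset.sum_congr rfl fun j _ => ?_
            rw [hW i j]; ring
        _ = (∑ i, ∑ j, hinv i j * ((2 / (n : ℝ)) * (Ric x i - Ric i x) * h j y))
              - ∑ i, ∑ j, hinv i j * A i x y j := by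
            rw [← Finset.sum_sub_distrib]
            refine Finset.sum_congr rfl fun i _ => ?_
            rw [← Finset.sum_sub_distrib]
        _ = (2 / (n : ℝ)) * (Ric x y - Ric y x) - Ric x y := by
            rw [← hRic]
            congr 1
            have := hdelta (fun i => (2 / (n : ℝ)) * (Ric x i - Ric i x))
            calc ∑ i, ∑ j, hinv i j * ((2 / (n : ℝ)) * (Ric x i - Ric i x) * h j y)
                = ∑ i, ∑ j, hinv i j * h j y * ((2 / (n : ℝ)) * (Ric x i - Ric i x)) := by
                  refine Finset.sum_congr rfl fun i _ => Finset.sum_congr rfl fun j _ => ?_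
                  ring
              _ = (2 / (n : ℝ)) * (Ric x y - Ric y x) := this
    have hB : ∀ i j, A x i j y = -(A i j x y) - A j x i y := by
      intro i j
      have := hBianchi x i j y
      linarith
    calc RicStar x y = ∑ i, ∑ j, hinv i j * A x i j y := hRicStar x y
      _ = ∑ i, ∑ j, (-(hinv i j * A i j x y) - hinv i j * A j x i y) := by
          refine Finset.sum_congr rfl fun i _ => Finset.sum_congr rfl fun j _ => ?_
          rw [hB i j]; ring
      _ = -(∑ i, ∑ j, hinv i j * A i j x y) - ∑ i, ∑ j, hinv i j * A j x i y := by
          simp [Finset.sum_sub_distrib]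
      _ = Ric x y - (2 / (n : ℝ)) * (Ric x y - Ric y x) := by
          rw [hzero, hswap, hmain]; ring
  have main : ∀ x y, (1/2) * (RicStar x y - RicStar y x)
      = (((n : ℝ) - 4) / (n : ℝ)) * ((1/2) * (Ric x y - Ric y x)) := by
    intro x y
    rw [key x y, key y x]
    field_simp
    ring
  refine ⟨main, fun h4 x y => ?_⟩
  have := main x y
  rw [h4] at this
  norm_num at this
  linarith
end

section
/- Let φ be an antisymmetric bilinear form on (V,h), dim V = n, and define A_{ijkl} = 2φ_{ij}h_{kl} + φ_{ik}h_{jl} − φ_{jk}h_{il} − φ_{il}h_{jk} + φ_{jl}h_{ik}. Then A is a Weyl tensor: A is a generalized curvature tensor and satisfies A_{ijkl} + A_{ijlk} = (2/n)(Ric(A)_{ji} − Ric(A)_{ij})h_{kl}. -/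
/-- For an antisymmetric bilinear form `φ` on `(V,h)`, the tensor
`A_{ijkl} = 2φ_{ij}h_{kl} + φ_{ik}h_{jl} − φ_{jk}h_{il} − φ_{il}h_{jk} + φ_{jl}h_{ik}`
is a Weyl tensor: a generalized curvature tensor satisfying
`A_{ijkl} + A_{ijlk} = (2/n)(Ric(A)_{ji} − Ric(A)_{ij})h_{kl}`. -/
theorem sigma4_minus_sigma5_is_weyl
    {n : ℕ} (hn : 3 ≤ n)
    (h hinv : Matrix (Fin n) (Fin n) ℝ)
    (hsymm : ∀ i j, h i j = h j i)
    (hinv1 : h * hinv = 1) (hinv2 : hinv * h = 1)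
    (φ : Matrix (Fin n) (Fin n) ℝ) (hφ : ∀ i j, φ i j = - φ j i)
    (A : Fin n → Fin n → Fin n → Fin n → ℝ)
    (hA : ∀ i j k l, A i j k l =
      2 * φ i j * h k l + φ i k * h j l - φ j k * h i l
        - φ i l * h j k + φ j l * h i k)
    (Ric : Fin n → Fin n → ℝ)
    (hRic : ∀ j k, Ric j k = ∑ i, ∑ l, hinv i l * A i j k l) :
    (∀ i j k l, A i j k l = - A j i k l) ∧
    (∀ i j k l, A i j k l + A j k i l + A k i j l = 0) ∧
    (∀ i j k l, A i j k l + A i j l k =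
      (2 / (n : ℝ)) * (Ric j i - Ric i j) * h k l) := by

  -- hinv is symmetric
  have hT : h.transpose = h := Matrix.ext fun a b => hsymm b a
  have h1 : hinv.transpose * h = 1 := by
    have := congrArg Matrix.transpose hinv1
    rwa [Matrix.transpose_mul, Matrix.transpose_one, hT] at this
  have hTinv : hinv.transpose = hinv := by
    calc hinv.transpose = hinv.transpose * (h * hinv) := by rw [hinv1, mul_one]
      _ = (hinv.transpose * h) * hinv := by rw [mul_assoc]
      _ = hinv := by rw [h1, one_mul]
  have hinvsymm : ∀ a b, hinv a b = hinv b a := by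
    intro a b
    have := congrFun (congrFun hTinv a) b
    simpa using this.symm
  have d1 : ∀ a b, (∑ l, hinv a l * h l b) = if a = b then (1:ℝ) else 0 := by
    intro a b
    have := congrFun (congrFun hinv2 a) b
    simpa [Matrix.mul_apply, Matrix.one_apply] using this
  have d2 : ∀ a b, (∑ i, h a i * hinv i b) = if a = b then (1:ℝ) else 0 := by
    intro a b
    have := congrFun (congrFun hinv1 a) b
    simpa [Matrix.mul_apply, Matrix.one_apply] using this
  have Szero : (∑ i, ∑ l, hinv i l * φ i l) = 0 := by
    have hneg : (∑ i, ∑ l, hinv i l * φ i l) = -(∑ i, ∑ l, hinv i l * φ i l) := by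
      nth_rewrite 2 [Finset.sum_comm]
      rw [← Finset.sum_neg_distrib]
      apply Finset.sum_congr rfl; intro i _
      rw [← Finset.sum_neg_distrib]
      apply Finset.sum_congr rfl; intro l _
      rw [hinvsymm i l, hφ i l]; ring
    linarith
  have hRicval : ∀ j k, Ric j k = -(n:ℝ) * φ j k := by
    intro j k
    rw [hRic]
    have inner : ∀ i, (∑ l, hinv i l * A i j k l) =
        2 * φ i j * (∑ l, hinv i l * h l k) + φ i k * (∑ l, hinv i l * h l j)
          - φ j k * (∑ l, hinv i l * h l i) - h j k * (∑ l, hinv i l * φ i l)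
          + h i k * (∑ l, hinv i l * φ j l) := by
      intro i
      have step : ∀ l, hinv i l * A i j k l =
          2 * φ i j * (hinv i l * h l k) + φ i k * (hinv i l * h l j)
            - φ j k * (hinv i l * h l i) - h j k * (hinv i l * φ i l)
            + h i k * (hinv i l * φ j l) := by
        intro l
        rw [hA, hsymm k l, hsymm j l, hsymm i l]
        ring
      rw [Finset.sum_congr rfl (fun l _ => step l)]
      rw [Finset.sum_add_distrib, Finset.sum_sub_distrib, Finset.sum_sub_distrib,
        Finset.sum_add_distrib, ← Finset.mul_sum, ← Finset.mul_sum, ← Finset.mul_sum,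
        ← Finset.mul_sum, ← Finset.mul_sum]
    rw [Finset.sum_congr rfl (fun i _ => inner i)]
    simp only [d1]
    rw [Finset.sum_add_distrib, Finset.sum_sub_distrib, Finset.sum_sub_distrib,
      Finset.sum_add_distrib]
    have t1 : (∑ i, 2 * φ i j * (if i = k then (1:ℝ) else 0)) = 2 * φ k j := by
      simp [mul_ite]
    have t2 : (∑ i, φ i k * (if i = j then (1:ℝ) else 0)) = φ j k := by
      simp [mul_ite]
    have t3 : (∑ i : Fin n, φ j k * (if True then (1:ℝ) else 0)) = n * φ j k := by
      simp [Finset.sum_const, mul_comm]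
    have t4 : (∑ i, h j k * (∑ l, hinv i l * φ i l)) = 0 := by
      rw [← Finset.mul_sum, Szero, mul_zero]
    have t5 : (∑ i, h i k * (∑ l, hinv i l * φ j l)) = φ j k := by
      calc (∑ i, h i k * (∑ l, hinv i l * φ j l))
          = ∑ i, ∑ l, (h k i * hinv i l) * φ j l := by
            apply Finset.sum_congr rfl; intro i _
            rw [Finset.mul_sum, hsymm i k]
            apply Finset.sum_congr rfl; intro l _; ring
        _ = ∑ l, ∑ i, (h k i * hinv i l) * φ j l := Finset.sum_comm
        _ = ∑ l, (∑ i, h k i * hinv i l) * φ j l := by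
            apply Finset.sum_congr rfl; intro l _
            rw [Finset.sum_mul]
        _ = ∑ l, (if k = l then (1:ℝ) else 0) * φ j l := by
            apply Finset.sum_congr rfl; intro l _
            rw [d2]
        _ = φ j k := by simp
    rw [t1, t2, t3, t4, t5, hφ k j]
    ring
  refine ⟨?_, ?_, ?_⟩
  · intro i j k l
    rw [hA, hA]
    linear_combination (2 * h k l) * hφ i j
  · intro i j k l
    rw [hA, hA, hA]
    rw [hφ j i, hφ k i, hφ k j, hsymm k i, hsymm j i, hsymm k j]
    ring
  · intro i j k l
    rw [hA, hA, hRicval, hRicval, hφ j i, hsymm l k]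
    have hn0 : (n:ℝ) ≠ 0 := by positivity
    field_simp
    ring
end

section
/- Let A be a Weyl tensor on (V,h) with dim V = n ≥ 3, and let A* denote the conjugate tensor A*(x,y,z,w) := −A(x,y,w,z). If n ≠ 4, then A* satisfies A*_{ijkl} + A*_{ijlk} = (4/(n−4)) · (Λ Ric*)_{ij} · h_{kl}, where Ric* is the Ricci tensor of A* (equal to Ric*(A)) and Λ denotes the antisymmetric part. -/
/-- For a Weyl tensor `A` on `(V,h)` with `n ≠ 4`, the conjugate
tensor `A*(x,y,z,w) = −A(x,y,w,z)` satisfies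
`A*_{ijkl} + A*_{ijlk} = (4/(n−4))·(Λ Ric*)_{ij}·h_{kl}`. -/
theorem conjugate_weyl_relation_n_ne_four
    {n : ℕ} (hn : 3 ≤ n) (hn4 : n ≠ 4)
    (h hinv : Matrix (Fin n) (Fin n) ℝ)
    (hsymm : ∀ i j, h i j = h j i)
    (hinv1 : h * hinv = 1) (hinv2 : hinv * h = 1)
    (A : Fin n → Fin n → Fin n → Fin n → ℝ)
    (hA12 : ∀ i j k l, A i j k l = - A j i k l)
    (hBianchi : ∀ i j k l, A i j k l + A j k i l + A k i j l = 0)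
    (Ric : Fin n → Fin n → ℝ)
    (hRic : ∀ x y, Ric x y = ∑ i, ∑ j, hinv i j * A i x y j)
    (hWeyl : ∀ x y z w, A x y z w + A x y w z =
      (2 / (n : ℝ)) * (Ric y x - Ric x y) * h z w)
    (Astar : Fin n → Fin n → Fin n → Fin n → ℝ)
    (hAstar : ∀ x y z w, Astar x y z w = - A x y w z)
    (RicStar : Fin n → Fin n → ℝ)
    (hRicStar : ∀ x y, RicStar x y = ∑ i, ∑ j, hinv i j * Astar i x y j) :
    ∀ i j k l, Astar i j k l + Astar i j l k =
      (4 / ((n : ℝ) - 4)) * ((1/2) * (RicStar i j - RicStar j i)) * h k l := by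
  have hn0 : (n:ℝ) ≠ 0 := by
    have : (0:ℕ) < n := by omega
    exact_mod_cast this.ne'
  have hn4' : (n:ℝ) - 4 ≠ 0 := by
    have h4 : (n:ℝ) ≠ 4 := by exact_mod_cast hn4
    intro hc; exact h4 (by linarith)
  have key : ∀ x y, RicStar x y = Ric x y - (2/(n:ℝ)) * (Ric x y - Ric y x) := by
    intro x y
    have hterm : ∀ i j : Fin n, hinv i j * Astar i x y j
        = hinv i j * A i x y j - (2/(n:ℝ)) * (Ric x i - Ric i x) * (hinv i j * h j y) := by
      intro i j
      have hw := hWeyl i x j y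
      have hs : Astar i x y j = A i x y j - (2/(n:ℝ)) * (Ric x i - Ric i x) * h j y := by
        rw [hAstar]; linarith
      rw [hs]; ring
    rw [hRicStar]
    simp only [hterm, Finset.sum_sub_distrib]
    have e1 : ∑ i, ∑ j, hinv i j * A i x y j = Ric x y := (hRic x y).symm
    have e2 : ∀ i : Fin n, ∑ j, (2/(n:ℝ)) * (Ric x i - Ric i x) * (hinv i j * h j y)
        = (2/(n:ℝ)) * (Ric x i - Ric i x) * ((1 : Matrix (Fin n) (Fin n) ℝ) i y) := by
      intro i
      rw [← Finset.mul_sum, ← Matrix.mul_apply, hinv2]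
    rw [e1]
    congr 1
    rw [Finset.sum_congr rfl (fun i _ => e2 i)]
    simp [Matrix.one_apply]
  intro i j k l
  have hw := hWeyl i j k l
  have hc : (4 / ((n:ℝ) - 4)) * ((1/2) * (RicStar i j - RicStar j i))
      = (2/(n:ℝ)) * (Ric i j - Ric j i) := by
    rw [key i j, key j i]
    field_simp
    ring
  rw [hAstar i j k l, hAstar i j l k, hc]
  linarith [hw]
end

section
/- Let A be a Weyl tensor on (V,h), n ≥ 3. The following are equivalent: (1) A is an algebraic curvature tensor (antisymmetric in the last two slots); (2) the conjugate tensor A*(x,y,z,w) := −A(x,y,w,z) satisfies the first Bianchi identity; (3) Λ Ric(A) = 0. -/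
/-- For a Weyl tensor `A` on `(V,h)`, `n ≥ 3`, the following are
equivalent: (1) `A` is an algebraic curvature tensor; (2) the conjugate tensor
`A*(x,y,z,w) = −A(x,y,w,z)` satisfies the first Bianchi identity;
(3) `Λ Ric(A) = 0`. -/
theorem weyl_algebraic_iff_conjugate_bianchi_iff_ricci_symm
    {n : ℕ} (hn : 3 ≤ n)
    (h hinv : Matrix (Fin n) (Fin n) ℝ)
    (hsymm : ∀ i j, h i j = h j i)
    (hinv1 : h * hinv = 1) (hinv2 : hinv * h = 1)
    (A : Fin n → Fin n → Fin n → Fin n → ℝ)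
    (hA12 : ∀ i j k l, A i j k l = - A j i k l)
    (hBianchi : ∀ i j k l, A i j k l + A j k i l + A k i j l = 0)
    (Ric : Fin n → Fin n → ℝ)
    (hRic : ∀ x y, Ric x y = ∑ i, ∑ j, hinv i j * A i x y j)
    (hWeyl : ∀ x y z w, A x y z w + A x y w z =
      (2 / (n : ℝ)) * (Ric y x - Ric x y) * h z w)
    (Astar : Fin n → Fin n → Fin n → Fin n → ℝ)
    (hAstar : ∀ x y z w, Astar x y z w = - A x y w z) :
    ((∀ x y z w, A x y z w = - A x y w z) ↔
      (∀ x y z w, Astar x y z w + Astar y z x w + Astar z x y w = 0)) ∧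
    ((∀ x y z w, A x y z w = - A x y w z) ↔
      (∀ x y, Ric x y = Ric y x)) := by
  have hn0 : (n : ℝ) ≠ 0 := Nat.cast_ne_zero.mpr (by omega)
  have hc : (2 / (n : ℝ)) ≠ 0 := by positivity
  have hNe : Nonempty (Fin n) := ⟨⟨0, by omega⟩⟩
  obtain ⟨i0⟩ := hNe
  -- nondegeneracy: some entry of h in column i0 is nonzero
  have hdeg : ∃ z w, h z w ≠ 0 := by
    by_contra hcon
    push_neg at hcon
    have : (hinv * h) i0 i0 = 0 := by
      rw [Matrix.mul_apply]
      exact Finset.sum_eq_zero fun j _ => by rw [hcon j i0, mul_zero]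
    rw [hinv2, Matrix.one_apply_eq] at this
    exact one_ne_zero this
  -- (3) → (1)
  have L3 : (∀ x y, Ric x y = Ric y x) → (∀ x y z w, A x y z w = - A x y w z) := by
    intro hs x y z w
    have := hWeyl x y z w
    rw [hs y x] at this
    simp at this
    linarith
  -- (1) → (3)
  have L1 : (∀ x y z w, A x y z w = - A x y w z) → (∀ x y, Ric x y = Ric y x) := by
    intro ha x y
    obtain ⟨z, w, hzw⟩ := hdeg
    have hW := hWeyl y x z w
    have := ha y x z w
    have h0 : (2 / (n : ℝ)) * (Ric x y - Ric y x) * h z w = 0 := by linarith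
    rcases mul_eq_zero.mp h0 with h1 | h1
    · rcases mul_eq_zero.mp h1 with h2 | h2
      · exact absurd h2 hc
      · linarith
    · exact absurd h1 hzw
  -- (3) → (2)
  have L4 : (∀ x y, Ric x y = Ric y x) →
      (∀ x y z w, Astar x y z w + Astar y z x w + Astar z x y w = 0) := by
    intro hs x y z w
    have e1 := L3 hs x y w z
    have e2 := L3 hs y z w x
    have e3 := L3 hs z x w y
    have hB := hBianchi x y z w
    rw [hAstar x y z w, hAstar y z x w, hAstar z x y w]
    linarith
  -- (2) → (3)
  have L2 : (∀ x y z w, Astar x y z w + Astar y z x w + Astar z x y w = 0) →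
      (∀ x y, Ric x y = Ric y x) := by
    intro hb x y
    -- key pointwise identity
    have key : ∀ z w : Fin n, (Ric y x - Ric x y) * h w z +
        (Ric z y - Ric y z) * h w x + (Ric x z - Ric z x) * h w y = 0 := by
      intro z w
      have hb' := hb x y z w
      rw [hAstar x y z w, hAstar y z x w, hAstar z x y w] at hb'
      have w1 := hWeyl x y w z
      have w2 := hWeyl y z w x
      have w3 := hWeyl z x w y
      have hB := hBianchi x y z w
      -- sum of w1,w2,w3 : (−stuff from hb') + (bianchi sum) = c * (...)
      have hsum : (2 / (n : ℝ)) * ((Ric y x - Ric x y) * h w z +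
          (Ric z y - Ric y z) * h w x + (Ric x z - Ric z x) * h w y) = 0 := by
        have := w1
        ring_nf at w1 w2 w3 ⊢
        nlinarith [w1, w2, w3, hb', hB]
      rcases mul_eq_zero.mp hsum with h1 | h1
      · exact absurd h1 hc
      · exact h1
    -- contract with hinv over z, w
    have contr : ∑ z, ∑ w, hinv z w * ((Ric y x - Ric x y) * h w z +
        (Ric z y - Ric y z) * h w x + (Ric x z - Ric z x) * h w y) = 0 := by
      refine Finset.sum_eq_zero fun z _ => Finset.sum_eq_zero fun w _ => ?_
      rw [key z w, mul_zero]
    have split : ∑ z, ∑ w, hinv z w * ((Ric y x - Ric x y) * h w z +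
        (Ric z y - Ric y z) * h w x + (Ric x z - Ric z x) * h w y)
        = (Ric y x - Ric x y) * (∑ z, ∑ w, hinv z w * h w z)
          + ∑ z, (Ric z y - Ric y z) * (∑ w, hinv z w * h w x)
          + ∑ z, (Ric x z - Ric z x) * (∑ w, hinv z w * h w y) := by
      rw [Finset.mul_sum]
      rw [← Finset.sum_add_distrib, ← Finset.sum_add_distrib]
      refine Finset.sum_congr rfl fun z _ => ?_
      rw [Finset.mul_sum, Finset.mul_sum, Finset.mul_sum]
      rw [← Finset.sum_add_distrib, ← Finset.sum_add_distrib]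
      refine Finset.sum_congr rfl fun w _ => ?_
      ring
    have t1 : (∑ z, ∑ w, hinv z w * h w z) = (n : ℝ) := by
      have : ∀ z : Fin n, ∑ w, hinv z w * h w z = 1 := by
        intro z
        have := congrFun (congrFun hinv2 z) z
        rw [Matrix.mul_apply] at this
        rw [this, Matrix.one_apply_eq]
      simp [this]
    have t2 : ∀ u : Fin n, ∀ f : Fin n → ℝ,
        (∑ z, f z * (∑ w, hinv z w * h w u)) = f u := by
      intro u f
      have hone : ∀ z, (∑ w, hinv z w * h w u) = if z = u then (1:ℝ) else 0 := by
        intro z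
        have := congrFun (congrFun hinv2 z) u
        rw [Matrix.mul_apply] at this
        rw [this, Matrix.one_apply]
      calc (∑ z, f z * (∑ w, hinv z w * h w u))
          = ∑ z, (if z = u then f z else 0) := by
            refine Finset.sum_congr rfl fun z _ => ?_
            rw [hone z]
            split <;> simp
        _ = f u := by rw [Finset.sum_ite_eq' Finset.univ u f]; simp
    rw [split, t1, t2 x (fun z => Ric z y - Ric y z),
        t2 y (fun z => Ric x z - Ric z x)] at contr
    -- contr : (Ric y x - Ric x y)*n + (Ric x y - Ric y x) + (Ric x y - Ric y x) = 0
    have hn2 : (3 : ℝ) ≤ (n : ℝ) := by exact_mod_cast hn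
    nlinarith [contr, hn2, sq_nonneg (Ric x y - Ric y x)]
  exact ⟨⟨fun h1 => L4 (L1 h1), fun h2 => L3 (L2 h2)⟩, ⟨L1, L3⟩⟩
end

section
/- Let A be a Weyl tensor with totally trace-free projective part: define p(A) := A + (1/(n+1))[2ΛRic·h + ΛRic∧h] + (1/(n−1))(S Ric)∧h. If p(A) = 0 then A = −(1/(n(n−1)))·τ_h·(h∧h), where τ_h = Σ h^{ij}Ric(e_i,e_j); i.e., A is of constant curvature type. -/
private lemma dsum_add {n : ℕ} (f g : Fin n → Fin n → ℝ) :
    (∑ y, ∑ w, (f y w + g y w)) = (∑ y, ∑ w, f y w) + (∑ y, ∑ w, g y w) := by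
  simp [Finset.sum_add_distrib]

private lemma dsum_smul {n : ℕ} (c : ℝ) (f : Fin n → Fin n → ℝ) :
    (∑ y, ∑ w, c * f y w) = c * ∑ y, ∑ w, f y w := by
  simp [Finset.mul_sum]

private lemma dsum_congr {n : ℕ} {f g : Fin n → Fin n → ℝ} (h : ∀ y w, f y w = g y w) :
    (∑ y, ∑ w, f y w) = ∑ y, ∑ w, g y w :=
  Finset.sum_congr rfl fun y _ => Finset.sum_congr rfl fun w _ => h y w

/-- For a Weyl tensor `A` with vanishing projective curvature
tensor `p(A) = A + (1/(n+1))[2ΛRic·h + ΛRic∧h] + (1/(n−1))(S Ric)∧h = 0`,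
one has `A = −(1/(n(n−1)))·τ_h·(h∧h)`, i.e. `A` is of constant curvature
type. Here `(θ₁∧θ₂)(x,y,z,w) = θ₁(x,z)θ₂(y,w) − θ₁(y,z)θ₂(x,w)`. -/
theorem projectively_flat_weyl_is_constant_curvature
    {n : ℕ} (hn : 3 ≤ n)
    (h hinv : Matrix (Fin n) (Fin n) ℝ)
    (hsymm : ∀ i j, h i j = h j i)
    (hinv1 : h * hinv = 1) (hinv2 : hinv * h = 1)
    (A : Fin n → Fin n → Fin n → Fin n → ℝ)
    (hA12 : ∀ i j k l, A i j k l = - A j i k l)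
    (hBianchi : ∀ i j k l, A i j k l + A j k i l + A k i j l = 0)
    (Ric : Fin n → Fin n → ℝ)
    (hRic : ∀ x y, Ric x y = ∑ i, ∑ j, hinv i j * A i x y j)
    (hWeyl : ∀ x y z w, A x y z w + A x y w z =
      (2 / (n : ℝ)) * (Ric y x - Ric x y) * h z w)
    (LRic SRic : Fin n → Fin n → ℝ)
    (hLRic : ∀ x y, LRic x y = (1/2) * (Ric x y - Ric y x))
    (hSRic : ∀ x y, SRic x y = (1/2) * (Ric x y + Ric y x))
    (τ : ℝ) (hτ : τ = ∑ i, ∑ j, hinv i j * Ric i j)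
    (hp : ∀ x y z w,
      A x y z w
        + (1 / ((n : ℝ) + 1)) * (2 * LRic x y * h z w
            + (LRic x z * h y w - LRic y z * h x w))
        + (1 / ((n : ℝ) - 1)) * (SRic x z * h y w - SRic y z * h x w) = 0) :
    ∀ x y z w, A x y z w =
      - (1 / ((n : ℝ) * ((n : ℝ) - 1))) * τ * (h x z * h y w - h y z * h x w) := by
  have hn3 : (3:ℝ) ≤ (n:ℝ) := by exact_mod_cast hn
  have hn0 : (n:ℝ) ≠ 0 := by intro hc; rw [hc] at hn3; norm_num at hn3
  have hn1 : ((n:ℝ) - 1) ≠ 0 := by intro hc; nlinarith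
  have hn2 : ((n:ℝ) + 1) ≠ 0 := by intro hc; nlinarith
  have hcan0 : (n:ℝ) * (1/(n:ℝ)) = 1 := by field_simp
  have hcan1 : ((n:ℝ) - 1) * (1/((n:ℝ) - 1)) = 1 := by field_simp
  have hcan2 : ((n:ℝ) + 1) * (1/((n:ℝ) + 1)) = 1 := by field_simp
  have hcanN : ((n:ℝ) * ((n:ℝ) - 1)) * (1/((n:ℝ) * ((n:ℝ) - 1))) = 1 := by
    field_simp
  -- symmetry of hinv
  have hT : h.transpose = h := by
    ext i j; exact hsymm j i
  have hTinv : hinv.transpose = hinv := by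
    have e1 : hinv.transpose * h = 1 := by
      rw [← hT, ← Matrix.transpose_mul, hinv1, Matrix.transpose_one]
    calc hinv.transpose = hinv.transpose * (h * hinv) := by rw [hinv1, mul_one]
      _ = (hinv.transpose * h) * hinv := by rw [Matrix.mul_assoc]
      _ = hinv := by rw [e1, one_mul]
  have hinvsymm : ∀ i j, hinv i j = hinv j i := by
    intro i j
    have : hinv.transpose j i = hinv j i := by rw [hTinv]
    simpa using this
  -- contraction lemmas
  have CA : ∀ (f : Fin n → ℝ) (u : Fin n),
      (∑ y, ∑ w, hinv y w * (f y * h u w)) = f u := by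
    intro f u
    have e : ∀ y, (∑ w, hinv y w * (f y * h u w))
        = f y * (1 : Matrix (Fin n) (Fin n) ℝ) y u := by
      intro y
      rw [← hinv2, Matrix.mul_apply, Finset.mul_sum]
      exact Finset.sum_congr rfl fun w _ => by rw [hsymm u w]; ring
    calc (∑ y, ∑ w, hinv y w * (f y * h u w))
        = ∑ y, f y * (1 : Matrix (Fin n) (Fin n) ℝ) y u :=
          Finset.sum_congr rfl fun y _ => e y
      _ = f u := by simp [Matrix.one_apply]
  have CB : ∀ (f : Fin n → ℝ) (u : Fin n),
      (∑ y, ∑ w, hinv y w * (f w * h u y)) = f u := by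
    intro f u
    rw [Finset.sum_comm]
    calc (∑ w, ∑ y, hinv y w * (f w * h u y))
        = ∑ w, ∑ y, hinv w y * (f w * h u y) :=
          dsum_congr fun a b => by rw [hinvsymm b a]
      _ = f u := CA f u
  have CC : (∑ y, ∑ w, hinv y w * h y w) = (n:ℝ) := by
    have e : ∀ y : Fin n, (∑ w, hinv y w * h y w) = 1 := by
      intro y
      have e1 : (∑ w, hinv y w * h y w) = (hinv * h) y y := by
        rw [Matrix.mul_apply]
        exact Finset.sum_congr rfl fun w _ => by rw [hsymm y w]
      rw [e1, hinv2, Matrix.one_apply_eq]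
    calc (∑ y, ∑ w, hinv y w * h y w) = ∑ _y : Fin n, (1:ℝ) :=
          Finset.sum_congr rfl fun y _ => e y
      _ = (n:ℝ) := by simp
  have tau1 : (∑ y, ∑ w, hinv y w * Ric y w) = τ := hτ.symm
  have tau2 : (∑ y, ∑ w, hinv y w * Ric w y) = τ := by
    rw [Finset.sum_comm]
    calc (∑ w, ∑ y, hinv y w * Ric w y)
        = ∑ w, ∑ y, hinv w y * Ric w y := dsum_congr fun a b => by rw [hinvsymm b a]
      _ = τ := tau1
  have CLl : (∑ y, ∑ w, hinv y w * LRic y w) = 0 := by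
    have e : ∀ y w : Fin n, hinv y w * LRic y w
        = (1/2) * (hinv y w * Ric y w) + (-(1/2)) * (hinv y w * Ric w y) := by
      intro y w; rw [hLRic]; ring
    rw [dsum_congr e, dsum_add, dsum_smul, dsum_smul, tau1, tau2]; ring
  have CSs : (∑ y, ∑ w, hinv y w * SRic y w) = τ := by
    have e : ∀ y w : Fin n, hinv y w * SRic y w
        = (1/2) * (hinv y w * Ric y w) + (1/2) * (hinv y w * Ric w y) := by
      intro y w; rw [hSRic]; ring
    rw [dsum_congr e, dsum_add, dsum_smul, dsum_smul, tau1, tau2]; ring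
  -- the key contracted identity
  have key : ∀ x z : Fin n,
      (4*(1/((n:ℝ)+1)) - 4/(n:ℝ)) * LRic x z
      + ((1/((n:ℝ)+1)) * LRic x z + (1/((n:ℝ)-1)) * SRic x z) * (n:ℝ)
      + (-(1/((n:ℝ)+1))) * LRic x z
      + (1/((n:ℝ)+1)) * LRic x z
      + (-((1/((n:ℝ)+1)) * h x z)) * 0
      + (-(1/((n:ℝ)-1))) * SRic x z
      + (1/((n:ℝ)-1)) * SRic x z
      + (-((1/((n:ℝ)-1)) * h x z)) * τ = 0 := by
    intro x z
    have Wp : ∀ y w : Fin n, (0:ℝ) =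
        (4*(1/((n:ℝ)+1)) - 4/(n:ℝ)) * (hinv y w * (LRic x y * h z w))
        + ((1/((n:ℝ)+1)) * LRic x z + (1/((n:ℝ)-1)) * SRic x z) * (hinv y w * h y w)
        + (-(1/((n:ℝ)+1))) * (hinv y w * (LRic y z * h x w))
        + (1/((n:ℝ)+1)) * (hinv y w * (LRic x w * h z y))
        + (-((1/((n:ℝ)+1)) * h x z)) * (hinv y w * LRic y w)
        + (-(1/((n:ℝ)-1))) * (hinv y w * (SRic y z * h x w))
        + (1/((n:ℝ)-1)) * (hinv y w * (SRic x w * h z y))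
        + (-((1/((n:ℝ)-1)) * h x z)) * (hinv y w * SRic y w) := by
      intro y w
      linear_combination (-(hinv y w)) * hp x y z w + (-(hinv y w)) * hp x y w z
        + (hinv y w) * hWeyl x y z w
        + ((4/(n:ℝ)) * h z w * hinv y w) * hLRic x y
        + (2*(1/((n:ℝ)+1)) * LRic x y * hinv y w) * hsymm w z
        + (((1/((n:ℝ)+1)) * LRic x w + (1/((n:ℝ)-1)) * SRic x w) * hinv y w) * hsymm y z
    have CAa : (∑ y, ∑ w, hinv y w * (LRic x y * h z w)) = LRic x z :=
      CA (fun a => LRic x a) z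
    have CAb : (∑ y, ∑ w, hinv y w * (LRic y z * h x w)) = LRic x z :=
      CA (fun a => LRic a z) x
    have CBa : (∑ y, ∑ w, hinv y w * (LRic x w * h z y)) = LRic x z :=
      CB (fun a => LRic x a) z
    have CAc : (∑ y, ∑ w, hinv y w * (SRic y z * h x w)) = SRic x z :=
      CA (fun a => SRic a z) x
    have CBb : (∑ y, ∑ w, hinv y w * (SRic x w * h z y)) = SRic x z :=
      CB (fun a => SRic x a) z
    have split : (∑ y, ∑ w,
        ((4*(1/((n:ℝ)+1)) - 4/(n:ℝ)) * (hinv y w * (LRic x y * h z w))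
        + ((1/((n:ℝ)+1)) * LRic x z + (1/((n:ℝ)-1)) * SRic x z) * (hinv y w * h y w)
        + (-(1/((n:ℝ)+1))) * (hinv y w * (LRic y z * h x w))
        + (1/((n:ℝ)+1)) * (hinv y w * (LRic x w * h z y))
        + (-((1/((n:ℝ)+1)) * h x z)) * (hinv y w * LRic y w)
        + (-(1/((n:ℝ)-1))) * (hinv y w * (SRic y z * h x w))
        + (1/((n:ℝ)-1)) * (hinv y w * (SRic x w * h z y))
        + (-((1/((n:ℝ)-1)) * h x z)) * (hinv y w * SRic y w)))
        = (4*(1/((n:ℝ)+1)) - 4/(n:ℝ)) * LRic x z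
          + ((1/((n:ℝ)+1)) * LRic x z + (1/((n:ℝ)-1)) * SRic x z) * (n:ℝ)
          + (-(1/((n:ℝ)+1))) * LRic x z
          + (1/((n:ℝ)+1)) * LRic x z
          + (-((1/((n:ℝ)+1)) * h x z)) * 0
          + (-(1/((n:ℝ)-1))) * SRic x z
          + (1/((n:ℝ)-1)) * SRic x z
          + (-((1/((n:ℝ)-1)) * h x z)) * τ := by
      simp only [dsum_add, dsum_smul]
      rw [CAa, CC, CAb, CBa, CLl, CAc, CBb, CSs]
    have zero0 : (∑ y, ∑ w,
        ((4*(1/((n:ℝ)+1)) - 4/(n:ℝ)) * (hinv y w * (LRic x y * h z w))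
        + ((1/((n:ℝ)+1)) * LRic x z + (1/((n:ℝ)-1)) * SRic x z) * (hinv y w * h y w)
        + (-(1/((n:ℝ)+1))) * (hinv y w * (LRic y z * h x w))
        + (1/((n:ℝ)+1)) * (hinv y w * (LRic x w * h z y))
        + (-((1/((n:ℝ)+1)) * h x z)) * (hinv y w * LRic y w)
        + (-(1/((n:ℝ)-1))) * (hinv y w * (SRic y z * h x w))
        + (1/((n:ℝ)-1)) * (hinv y w * (SRic x w * h z y))
        + (-((1/((n:ℝ)-1)) * h x z)) * (hinv y w * SRic y w)))
        = 0 := by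
      rw [dsum_congr (g := fun _ _ => (0:ℝ)) (fun y w => (Wp y w).symm)]
      simp
    exact split.symm.trans zero0
  -- S Ric = (τ/n) h
  have hSx : ∀ x z : Fin n, (n:ℝ) * SRic x z = τ * h x z := by
    intro x z
    have k1 := key x z
    have k2 := key z x
    rw [show LRic z x = -LRic x z from by rw [hLRic, hLRic]; ring,
        show SRic z x = SRic x z from by rw [hSRic, hSRic]; ring,
        hsymm z x] at k2
    linear_combination (((n:ℝ)-1)/2) * k1 + (((n:ℝ)-1)/2) * k2
      + (τ * h x z - (n:ℝ) * SRic x z) * hcan1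
  -- LRic = 0
  have hL : ∀ x z : Fin n, LRic x z = 0 := by
    intro x z
    have k1 := key x z
    have hq : ((n:ℝ)^2 - 4) * LRic x z = 0 := by
      linear_combination ((n:ℝ)*((n:ℝ)+1)) * k1
        - ((n:ℝ)*((n:ℝ)+1)*(1/((n:ℝ)-1))) * hSx x z
        - (((n:ℝ)^2 + 4*(n:ℝ)) * LRic x z) * hcan2
        + (4*((n:ℝ)+1) * LRic x z) * hcan0
    have hne : ((n:ℝ)^2 - 4) ≠ 0 := by
      have : (0:ℝ) < (n:ℝ)^2 - 4 := by nlinarith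
      exact this.ne'
    rcases mul_eq_zero.mp hq with hc | hc
    · exact absurd hc hne
    · exact hc
  -- conclusion
  intro x y z w
  have hA : (n:ℝ) * ((n:ℝ) - 1) * A x y z w
      = -(τ * (h x z * h y w - h y z * h x w)) := by
    linear_combination ((n:ℝ)*((n:ℝ)-1)) * hp x y z w
      - (2*(n:ℝ)*((n:ℝ)-1)*(1/((n:ℝ)+1)) * h z w) * hL x y
      - ((n:ℝ)*((n:ℝ)-1)*(1/((n:ℝ)+1)) * h y w) * hL x z
      + ((n:ℝ)*((n:ℝ)-1)*(1/((n:ℝ)+1)) * h x w) * hL y z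
      - (((n:ℝ)-1)*(1/((n:ℝ)-1)) * h y w) * hSx x z
      + (((n:ℝ)-1)*(1/((n:ℝ)-1)) * h x w) * hSx y z
      + (τ * h y z * h x w - τ * h x z * h y w) * hcan1
  linear_combination (1/((n:ℝ)*((n:ℝ)-1))) * hA + (-(A x y z w)) * hcanN
end

section
/- Let A be a Weyl tensor on (V,h), n ≥ 4, and write A = A_alg + H where H := −(1/n)[2(ΛRic)·h + (ΛRic)∧₁h] is the Higa term and A_alg := A − H. Then A_alg is an algebraic curvature tensor: it is antisymmetric in the first two and last two slots and satisfies the first Bianchi identity. Consequently 𝔚 = 𝔄 ⊕ 𝔓 where 𝔓 = {(σ₄−σ₅)φ : φ ∈ Λ²}. -/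
/-- For a Weyl tensor `A` (`n ≥ 4`) with Higa term
`H = −(1/n)[2(ΛRic)·h + (ΛRic)∧₁h]`, the difference `A_alg = A − H` is an
algebraic curvature tensor: antisymmetric in the first two and in the last
two slots, and satisfying the first Bianchi identity. Consequently
`𝔚 = 𝔄 ⊕ 𝔓` with `𝔓 = {(σ₄−σ₅)φ : φ ∈ Λ²}`. -/
theorem weyl_minus_higa_is_algebraic
    {n : ℕ} (hn : 4 ≤ n)
    (h hinv : Matrix (Fin n) (Fin n) ℝ)
    (hsymm : ∀ i j, h i j = h j i)
    (hinv1 : h * hinv = 1) (hinv2 : hinv * h = 1)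
    (A : Fin n → Fin n → Fin n → Fin n → ℝ)
    (hA12 : ∀ i j k l, A i j k l = - A j i k l)
    (hBianchi : ∀ i j k l, A i j k l + A j k i l + A k i j l = 0)
    (Ric : Fin n → Fin n → ℝ)
    (hRic : ∀ x y, Ric x y = ∑ i, ∑ j, hinv i j * A i x y j)
    (hWeyl : ∀ x y z w, A x y z w + A x y w z =
      (2 / (n : ℝ)) * (Ric y x - Ric x y) * h z w)
    (LRic : Fin n → Fin n → ℝ)
    (hLRic : ∀ x y, LRic x y = (1/2) * (Ric x y - Ric y x))
    (H : Fin n → Fin n → Fin n → Fin n → ℝ)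
    (hH : ∀ x y z w, H x y z w = - (1 / (n : ℝ)) *
      (2 * LRic x y * h z w +
        (LRic x z * h y w - LRic y z * h x w
          - LRic x w * h y z + LRic y w * h x z)))
    (Aalg : Fin n → Fin n → Fin n → Fin n → ℝ)
    (hAalg : ∀ x y z w, Aalg x y z w = A x y z w - H x y z w) :
    (∀ x y z w, Aalg x y z w = - Aalg y x z w) ∧
    (∀ x y z w, Aalg x y z w = - Aalg x y w z) ∧
    (∀ x y z w, Aalg x y z w + Aalg y z x w + Aalg z x y w = 0) := by
  refine ⟨fun x y z w => ?_, fun x y z w => ?_, fun x y z w => ?_⟩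
  · simp only [hAalg, hH, hLRic]
    linear_combination hA12 x y z w
  · simp only [hAalg, hH, hLRic]
    rw [hsymm w z]
    linear_combination hWeyl x y z w
  · simp only [hAalg, hH, hLRic]
    rw [hsymm z x, hsymm y x, hsymm z y]
    linear_combination hBianchi x y z w
end
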